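/- For every connected graph G, every diameter of G has eccentricity at most 4·k(G); that is, s(G) ≤ 4k(G). -/
import Mathlib


open SimpleGraph

variable {V : Type*}

/-- Distance from a vertex `x` to (the support of) a walk `p`. -/
noncomputable def walkDist (G : SimpleGraph V) {u v : V} (x : V) (p : G.Walk u v) : ℕ :=
  sInf {n | ∃ w ∈ p.support, G.dist x w = n}

/-- A walk is a shortest path when its length equals the distance between its ends. -/
noncomputable def IsShortestPath (G : SimpleGraph V) {u v : V} (p : G.Walk u v) : Prop :=
  p.length = G.dist u v

/-- Eccentricity of a walk: the largest distance from any vertex to the walk. -/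
noncomputable def walkEcc [Fintype V] (G : SimpleGraph V) {u v : V} (p : G.Walk u v) : ℕ :=
  sSup {n | ∃ x : V, walkDist G x p = n}

/-- A diameter: a shortest path of maximum length among all distances. -/
noncomputable def IsDiameter [Fintype V] (G : SimpleGraph V) {u v : V} (p : G.Walk u v) : Prop :=
  IsShortestPath G p ∧ ∀ a b : V, G.dist a b ≤ p.length

/-- `k(G)`: minimum eccentricity over all shortest paths. -/
noncomputable def minK [Fintype V] (G : SimpleGraph V) : ℕ :=
  sInf {n | ∃ (u v : V) (p : G.Walk u v), IsShortestPath G p ∧ walkEcc G p = n}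

/-- `l(G)`: minimum eccentricity over all diameters. -/
noncomputable def minL [Fintype V] (G : SimpleGraph V) : ℕ :=
  sInf {n | ∃ (u v : V) (p : G.Walk u v), IsDiameter G p ∧ walkEcc G p = n}

/-- `s(G)`: maximum eccentricity over all diameters. -/
noncomputable def maxS [Fintype V] (G : SimpleGraph V) : ℕ :=
  sSup {n | ∃ (u v : V) (p : G.Walk u v), IsDiameter G p ∧ walkEcc G p = n}

section Aux

variable {G : SimpleGraph V}

private lemma dist_getVert_le (hG : G.Connected) {u v : V} (p : G.Walk u v) :
    ∀ i j : ℕ, i ≤ j → G.dist (p.getVert i) (p.getVert j) ≤ j - i := by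
  induction p with
  | nil =>
    intro i j _
    rw [Walk.getVert_of_length_le _ (by simp), Walk.getVert_of_length_le _ (by simp)]
    simp [SimpleGraph.dist_self]
  | @cons a b w h q ih =>
    intro i j hij
    match i, j with
    | 0, 0 => simp
    | 0, (j'+1) =>
      rw [Walk.getVert_zero, Walk.getVert_cons_succ]
      have t1 : G.dist a (q.getVert j') ≤ G.dist a b + G.dist b (q.getVert j') :=
        hG.dist_triangle
      have h1 : G.dist a b = 1 := SimpleGraph.dist_eq_one_iff_adj.mpr h
      have h2 := ih 0 j' (Nat.zero_le _)
      rw [Walk.getVert_zero] at h2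
      omega
    | (i'+1), (j'+1) =>
      rw [Walk.getVert_cons_succ, Walk.getVert_cons_succ]
      have := ih i' j' (by omega)
      omega

private lemma le_dist_getVert (hG : G.Connected) {u v : V} {p : G.Walk u v}
    (hp : IsShortestPath G p) {i j : ℕ} (hij : i ≤ j) (hj : j ≤ p.length) :
    j - i ≤ G.dist (p.getVert i) (p.getVert j) := by
  have h1 : G.dist u (p.getVert i) ≤ i := by
    have := dist_getVert_le hG p 0 i (Nat.zero_le _)
    rwa [Walk.getVert_zero, Nat.sub_zero] at this
  have h2 : G.dist (p.getVert j) v ≤ p.length - j := by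
    have := dist_getVert_le hG p j p.length hj
    rwa [Walk.getVert_length] at this
  have t1 : G.dist u v ≤ G.dist u (p.getVert j) + G.dist (p.getVert j) v :=
    hG.dist_triangle
  have t2 : G.dist u (p.getVert j) ≤
      G.dist u (p.getVert i) + G.dist (p.getVert i) (p.getVert j) :=
    hG.dist_triangle
  have h4 : p.length = G.dist u v := hp
  omega

private lemma exists_walkDist (x : V) {u v : V} (p : G.Walk u v) :
    ∃ w ∈ p.support, G.dist x w = walkDist G x p := by
  have h : {n | ∃ w ∈ p.support, G.dist x w = n}.Nonempty :=
    ⟨G.dist x u, u, p.start_mem_support, rfl⟩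
  exact Nat.sInf_mem h

private lemma walkDist_le_of_mem {x w : V} {u v : V} {p : G.Walk u v}
    (hw : w ∈ p.support) : walkDist G x p ≤ G.dist x w :=
  Nat.sInf_le ⟨w, hw, rfl⟩

private lemma walkDist_le_walkEcc [Fintype V] (x : V) {u v : V} (p : G.Walk u v) :
    walkDist G x p ≤ walkEcc G p :=
  le_csSup ((Set.finite_range fun y => walkDist G y p).bddAbove) ⟨x, rfl⟩

private lemma flip_cases (Q : ℕ → Prop) (d : ℕ) :
    (∀ m, m ≤ d → Q m) ∨ (∀ m, m ≤ d → ¬ Q m) ∨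
      ∃ m, m < d ∧ ((Q m ∧ ¬ Q (m+1)) ∨ (¬ Q m ∧ Q (m+1))) := by
  induction d with
  | zero =>
    by_cases h : Q 0
    · exact Or.inl fun m hm => by rwa [Nat.le_zero.mp hm]
    · exact Or.inr (Or.inl fun m hm => by rwa [Nat.le_zero.mp hm])
  | succ d ih =>
    rcases ih with h | h | ⟨m, hm, hflip⟩
    · by_cases hq : Q (d+1)
      · left
        intro m hm
        rcases Nat.lt_or_ge m (d+1) with h' | h'
        · exact h m (by omega)
        · have hme : m = d + 1 := by omega
          exact hme ▸ hq
      · exact Or.inr (Or.inr ⟨d, by omega, Or.inl ⟨h d le_rfl, hq⟩⟩)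
    · by_cases hq : Q (d+1)
      · exact Or.inr (Or.inr ⟨d, by omega, Or.inr ⟨h d le_rfl, hq⟩⟩)
      · right; left
        intro m hm
        rcases Nat.lt_or_ge m (d+1) with h' | h'
        · exact h m (by omega)
        · have hme : m = d + 1 := by omega
          exact hme ▸ hq
    · exact Or.inr (Or.inr ⟨m, by omega, hflip⟩)

/-- The key combinatorial lemma: any vertex is within `4 * walkEcc G P` of any
diametral path, where `P` is any shortest path. -/
private lemma key [Fintype V] (hG : G.Connected) {p q : V} (P : G.Walk p q)
    (hP : IsShortestPath G P) {u v : V} (D : G.Walk u v) (hD : IsDiameter G D)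
    (x : V) : walkDist G x D ≤ 4 * walkEcc G P := by
  set k := walkEcc G P with hk
  set d := D.length with hd
  -- the nearest vertex of P to x, at position t
  obtain ⟨c, hcmem, hcdist⟩ := exists_walkDist x P
  have hxc : G.dist x c ≤ k := hcdist ▸ walkDist_le_walkEcc x P
  obtain ⟨t, hct, htle⟩ := Walk.mem_support_iff_exists_getVert.mp hcmem
  -- nearest vertices of P to the vertices of D, at positions f m
  have hfm : ∀ m : ℕ, ∃ i, (P.getVert i ∈ P.support ∧
      G.dist (D.getVert m) (P.getVert i) ≤ k) ∧ i ≤ P.length := by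
    intro m
    obtain ⟨c', hc'mem, hc'dist⟩ := exists_walkDist (D.getVert m) P
    obtain ⟨i, hi, hile⟩ := Walk.mem_support_iff_exists_getVert.mp hc'mem
    refine ⟨i, ⟨hi ▸ hc'mem, ?_⟩, hile⟩
    rw [hi]
    exact hc'dist ▸ walkDist_le_walkEcc (D.getVert m) P
  choose f hfprop hfle using hfm
  have hfk : ∀ m, G.dist (D.getVert m) (P.getVert (f m)) ≤ k := fun m => (hfprop m).2
  -- length facts
  have hPlen : P.length ≤ d := by
    have h1 : P.length = G.dist p q := hP
    have h2 := hD.2 p q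
    omega
  have hDlen : D.length = G.dist u v := hD.1
  -- the crucial claim: some position f m is within 2k of t
  have hmain : ∃ m, m ≤ d ∧ t ≤ f m + 2 * k ∧ f m ≤ t + 2 * k := by
    by_contra hcon
    push_neg at hcon
    have H : ∀ m, m ≤ d → f m + 2 * k < t ∨ t + 2 * k < f m := by
      intro m hm
      by_cases h1 : t ≤ f m + 2 * k
      · exact Or.inr (hcon m hm h1)
      · exact Or.inl (by omega)
    -- distance between consecutive "shadows" on P
    have hstep : ∀ m, G.dist (P.getVert (f m)) (P.getVert (f (m+1))) ≤ 2 * k + 1 := by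
      intro m
      have t1 : G.dist (P.getVert (f m)) (P.getVert (f (m+1))) ≤
          G.dist (P.getVert (f m)) (D.getVert m) +
            G.dist (D.getVert m) (P.getVert (f (m+1))) := hG.dist_triangle
      have t2 : G.dist (D.getVert m) (P.getVert (f (m+1))) ≤
          G.dist (D.getVert m) (D.getVert (m+1)) +
            G.dist (D.getVert (m+1)) (P.getVert (f (m+1))) := hG.dist_triangle
      have h1 : G.dist (P.getVert (f m)) (D.getVert m) ≤ k := by
        rw [G.dist_comm]; exact hfk m
      have h2 : G.dist (D.getVert m) (D.getVert (m+1)) ≤ 1 := by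
        have := dist_getVert_le hG D m (m+1) (by omega)
        omega
      have h3 := hfk (m+1)
      omega
    -- positions of consecutive shadows are within 2k+1
    have hstep' : ∀ m, f (m+1) ≤ f m + (2 * k + 1) ∧ f m ≤ f (m+1) + (2 * k + 1) := by
      intro m
      rcases le_total (f m) (f (m+1)) with hle | hle
      · have := le_dist_getVert hG hP hle (hfle (m+1))
        have := hstep m
        omega
      · have h1 := le_dist_getVert hG hP hle (hfle m)
        have h2 : G.dist (P.getVert (f (m+1))) (P.getVert (f m)) =
            G.dist (P.getVert (f m)) (P.getVert (f (m+1))) := G.dist_comm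
        have := hstep m
        omega
    -- the shadows of the two endpoints of D are far apart on P
    have hends : d ≤ 2 * k + (f d - f 0) ∨ d ≤ 2 * k + (f 0 - f d) := by
      have t1 : G.dist u v ≤ G.dist u (P.getVert (f 0)) +
          G.dist (P.getVert (f 0)) v := hG.dist_triangle
      have t2 : G.dist (P.getVert (f 0)) v ≤
          G.dist (P.getVert (f 0)) (P.getVert (f d)) +
            G.dist (P.getVert (f d)) v := hG.dist_triangle
      have h1 : G.dist u (P.getVert (f 0)) ≤ k := by
        have := hfk 0; rwa [Walk.getVert_zero] at this
      have h2 : G.dist (P.getVert (f d)) v ≤ k := by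
        have := hfk d
        rw [hd, Walk.getVert_length] at this
        rw [G.dist_comm]
        exact this
      rcases le_total (f 0) (f d) with hle | hle
      · left
        have := dist_getVert_le hG P (f 0) (f d) hle
        omega
      · right
        have h3 := dist_getVert_le hG P (f d) (f 0) hle
        have h4 : G.dist (P.getVert (f 0)) (P.getVert (f d)) =
            G.dist (P.getVert (f d)) (P.getVert (f 0)) := G.dist_comm
        omega
    rcases flip_cases (fun m => f m + 2 * k < t) d with hall | hall | ⟨m, hmd, hflip⟩
    · have h0 := hall 0 (Nat.zero_le _)
      have hdd := hall d le_rfl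
      omega
    · have h0 : t + 2 * k < f 0 := by
        rcases H 0 (Nat.zero_le _) with h | h
        · exact absurd h (hall 0 (Nat.zero_le _))
        · exact h
      have hdd : t + 2 * k < f d := by
        rcases H d le_rfl with h | h
        · exact absurd h (hall d le_rfl)
        · exact h
      have hf0 := hfle 0
      have hfd := hfle d
      omega
    · have hs := hstep' m
      rcases hflip with ⟨h1, h2⟩ | ⟨h1, h2⟩
      · have h3 : t + 2 * k < f (m+1) := by
          rcases H (m+1) (by omega) with h | h
          · exact absurd h h2
          · exact h
        omega
      · have h3 : t + 2 * k < f m := by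
          rcases H m (by omega) with h | h
          · exact absurd h h1
          · exact h
        omega
  -- conclude
  obtain ⟨m, hmd, hm1, hm2⟩ := hmain
  have hzmem : D.getVert m ∈ D.support :=
    Walk.mem_support_iff_exists_getVert.mpr ⟨m, rfl, hmd⟩
  have hwd : walkDist G x D ≤ G.dist x (D.getVert m) := walkDist_le_of_mem hzmem
  have t1 : G.dist x (D.getVert m) ≤ G.dist x c + G.dist c (D.getVert m) :=
    hG.dist_triangle
  have t2 : G.dist c (D.getVert m) ≤
      G.dist c (P.getVert (f m)) + G.dist (P.getVert (f m)) (D.getVert m) :=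
    hG.dist_triangle
  have h1 : G.dist (P.getVert (f m)) (D.getVert m) ≤ k := by
    rw [G.dist_comm]; exact hfk m
  have h2 : G.dist c (P.getVert (f m)) ≤ 2 * k := by
    rw [← hct]
    rcases le_total t (f m) with hle | hle
    · have := dist_getVert_le hG P t (f m) hle
      omega
    · have h3 := dist_getVert_le hG P (f m) t hle
      have h4 : G.dist (P.getVert t) (P.getVert (f m)) =
          G.dist (P.getVert (f m)) (P.getVert t) := G.dist_comm
      omega
  omega

end Aux

theorem stmt9 [Fintype V] (G : SimpleGraph V) (hG : G.Connected) :
    (∀ (u v : V) (D : G.Walk u v), IsDiameter G D → walkEcc G D ≤ 4 * minK G) ∧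
    maxS G ≤ 4 * minK G := by
  -- there is a shortest path whose eccentricity is minK G
  obtain ⟨v0⟩ := hG.nonempty
  have hset : {n | ∃ (u v : V) (p : G.Walk u v),
      IsShortestPath G p ∧ walkEcc G p = n}.Nonempty := by
    refine ⟨walkEcc G (Walk.nil : G.Walk v0 v0), v0, v0, Walk.nil, ?_, rfl⟩
    show (Walk.nil : G.Walk v0 v0).length = G.dist v0 v0
    simp [SimpleGraph.dist_self]
  obtain ⟨a, b, P, hPs, hPk⟩ := Nat.sInf_mem hset
  have main : ∀ (u v : V) (D : G.Walk u v), IsDiameter G D →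
      walkEcc G D ≤ 4 * minK G := by
    intro u v D hD
    refine csSup_le' ?_
    rintro n ⟨x, rfl⟩
    calc walkDist G x D ≤ 4 * walkEcc G P := key hG P hPs D hD x
      _ = 4 * minK G := congrArg (fun n => 4 * n) hPk
  refine ⟨main, ?_⟩
  refine csSup_le' ?_
  rintro n ⟨u, v, D, hD, rfl⟩
  exact main u v D hD
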